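/- Define operators I(z^j z*^k) on ℂ[z] ⊗ ℂ[[t]] by I(z^j z*^k): z^m ↦ ((q^{2m};q^{-2})_k / (tq^{2m};q^{-2})_k) z^{m−k+j} for k ≤ m and 0 for k > m, where 1/(tq^{2m};q^{-2})_k is expanded as a formal power series in t. Then the ℂ[[t]]-linear extension Q of I to Pol(ℂ)_q[[t]] is injective. -/

import Mathlib

open Finset Polynomial

/-- The prefactor `(q^{2m}; q^{-2})_k = ∏_{i=0}^{k-1} (1 - q^{2m-2i})`. -/
noncomputable def pochDown (q : ℝ) (m k : ℕ) : ℂ :=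
  ∏ i ∈ range k, (1 - (q : ℂ) ^ (2 * (m : ℤ) - 2 * i))

/-- The Taylor expansion in `t` of `1/(tq^{2m}; q^{-2})_k`:
`∏_{i=0}^{k-1} (1 - q^{2m-2i} t)⁻¹ = ∏_{i=0}^{k-1} Σ_n (q^{2m-2i})^n tⁿ`. -/
noncomputable def invSeries (q : ℝ) (m k : ℕ) : PowerSeries ℂ :=
  ∏ i ∈ range k, PowerSeries.mk fun n => ((q : ℂ) ^ (2 * (m : ℤ) - 2 * i)) ^ n

/-- The coefficient of `t^b` in `(q^{2m};q^{-2})_k / (tq^{2m};q^{-2})_k`. -/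
noncomputable def Icoef (q : ℝ) (m k b : ℕ) : ℂ :=
  pochDown q m k * PowerSeries.coeff b (invSeries q m k)

/-- The map `Q`.  An element of `Pol(ℂ)_q[[t]]` is represented by its sequence of
`t`-coefficients `f : ℕ → ((ℕ×ℕ) →₀ ℂ)`, each `t`-coefficient written in the basis
`{z^j z*^k}` of `Pol(ℂ)_q`; an element of `End_ℂ(ℂ[z])[[t]]` is represented by the
sequence of its `t`-coefficients, acting on `ℂ[z]`.  `Q(Σ f_a t^a) = Σ I(f_a) t^a`
where `I(z^j z*^k) : z^m ↦ ((q^{2m};q^{-2})_k/(tq^{2m};q^{-2})_k) z^{m-k+j}` for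
`k ≤ m`, and `0` for `k > m`, the rational function being expanded in powers of `t`. -/
noncomputable def Qmap (q : ℝ) (f : ℕ → ((ℕ × ℕ) →₀ ℂ)) : ℕ → Polynomial ℂ → Polynomial ℂ :=
  fun n p =>
    ∑ a ∈ range (n + 1), ∑ jk ∈ (f a).support,
      f a jk •
        ∑ m ∈ p.support, p.coeff m •
          (if jk.2 ≤ m then Icoef q m jk.2 (n - a) • (X : Polynomial ℂ) ^ (m - jk.2 + jk.1)
           else 0)

/-! ### Auxiliary lemmas -/

/-- The polynomial `∏_{i<k} (1 - q^{-2i} x)`, whose value at `x = q^{2m}` is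
`pochDown q m k`. -/
noncomputable def Ppoly (q : ℝ) (k : ℕ) : Polynomial ℂ :=
  ∏ i ∈ range k, (1 - C ((q : ℂ) ^ (-(2 * (i : ℤ)))) * X)

lemma qC_ne_zero {q : ℝ} (hq0 : 0 < q) : (q : ℂ) ≠ 0 := by
  exact_mod_cast hq0.ne'

lemma eval_Ppoly {q : ℝ} (hq0 : 0 < q) (m k : ℕ) :
    eval ((q : ℂ) ^ (2 * (m : ℤ))) (Ppoly q k) = pochDown q m k := by
  rw [Ppoly, pochDown, eval_prod]
  refine Finset.prod_congr rfl fun i _ => ?_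
  have : (q : ℂ) ^ (2 * (m : ℤ) - 2 * i)
      = (q : ℂ) ^ (-(2 * (i : ℤ))) * (q : ℂ) ^ (2 * (m : ℤ)) := by
    rw [← zpow_add₀ (qC_ne_zero hq0)]; ring_nf
  simp [this]

lemma Ppoly_factor_ne_zero {q : ℝ} (hq0 : 0 < q) (i : ℕ) :
    (1 - C ((q : ℂ) ^ (-(2 * (i : ℤ)))) * X : Polynomial ℂ) ≠ 0 := by
  have ha : ((q : ℂ) ^ (-(2 * (i : ℤ)))) ≠ 0 := zpow_ne_zero _ (qC_ne_zero hq0)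
  have h1 : (1 - C ((q : ℂ) ^ (-(2 * (i : ℤ)))) * X : Polynomial ℂ)
      = C (-((q : ℂ) ^ (-(2 * (i : ℤ))))) * X + C 1 := by
    simp [map_neg]; ring
  intro h
  have := natDegree_linear (a := -((q : ℂ) ^ (-(2 * (i : ℤ))))) (b := (1:ℂ)) (by simpa using ha)
  rw [← h1, h] at this
  simp at this

lemma natDegree_Ppoly {q : ℝ} (hq0 : 0 < q) (k : ℕ) :
    (Ppoly q k).natDegree = k := by
  rw [Ppoly, natDegree_prod _ _ (fun i _ => Ppoly_factor_ne_zero hq0 i)]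
  have : ∀ i : ℕ, (1 - C ((q : ℂ) ^ (-(2 * (i : ℤ)))) * X : Polynomial ℂ).natDegree = 1 := by
    intro i
    have ha : ((q : ℂ) ^ (-(2 * (i : ℤ)))) ≠ 0 := zpow_ne_zero _ (qC_ne_zero hq0)
    have h1 : (1 - C ((q : ℂ) ^ (-(2 * (i : ℤ)))) * X : Polynomial ℂ)
        = C (-((q : ℂ) ^ (-(2 * (i : ℤ))))) * X + C 1 := by
      simp [map_neg]; ring
    rw [h1, natDegree_linear (by simpa using ha)]
  rw [Finset.sum_congr rfl fun i _ => this i]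
  simp

lemma Ppoly_ne_zero {q : ℝ} (hq0 : 0 < q) (k : ℕ) : Ppoly q k ≠ 0 := by
  rw [Ppoly]
  exact Finset.prod_ne_zero_iff.2 fun i _ => Ppoly_factor_ne_zero hq0 i

lemma coeff_Ppoly_ne_zero {q : ℝ} (hq0 : 0 < q) (k : ℕ) :
    (Ppoly q k).coeff k ≠ 0 := by
  have h1 : (Ppoly q k).coeff k = (Ppoly q k).leadingCoeff := by
    rw [Polynomial.leadingCoeff, natDegree_Ppoly hq0]
  rw [h1, Polynomial.leadingCoeff_ne_zero]
  exact Ppoly_ne_zero hq0 k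

/-- Polynomials of pairwise distinct degrees are linearly independent. -/
lemma lemA {q : ℝ} (hq0 : 0 < q) (s : Finset ℕ) (c : ℕ → ℂ) :
    ∑ k ∈ s, C (c k) * Ppoly q k = 0 → ∀ k ∈ s, c k = 0 := by
  induction s using Finset.induction_on_max with
  | empty => simp
  | insert a s ha ih =>
    intro hsum
    have hanotmem : a ∉ s := fun hmem => lt_irrefl a (ha a hmem)
    rw [Finset.sum_insert hanotmem] at hsum
    have hca : c a = 0 := by
      have hcoeff := congrArg (fun p => Polynomial.coeff p a) hsum
      simp only [coeff_add, coeff_zero, coeff_C_mul] at hcoeff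
      have hrest : (∑ k ∈ s, C (c k) * Ppoly q k).coeff a = 0 := by
        rw [Polynomial.finset_sum_coeff]
        refine Finset.sum_eq_zero fun k hk => ?_
        apply coeff_eq_zero_of_natDegree_lt
        calc (C (c k) * Ppoly q k).natDegree ≤ (Ppoly q k).natDegree :=
              natDegree_C_mul_le _ _
          _ = k := natDegree_Ppoly hq0 k
          _ < a := ha k hk
      rw [hrest, add_zero] at hcoeff
      exact (mul_eq_zero.1 hcoeff).resolve_right (coeff_Ppoly_ne_zero hq0 a)
    have hsum' : ∑ k ∈ s, C (c k) * Ppoly q k = 0 := by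
      rw [hca] at hsum; simpa using hsum
    intro k hk
    rcases Finset.mem_insert.1 hk with rfl | hk'
    · exact hca
    · exact ih hsum' k hk'

/-- If a linear combination of the `pochDown q · k` vanishes for all large `m`,
all coefficients vanish. -/
lemma lemA2 {q : ℝ} (hq0 : 0 < q) (hq1 : q < 1) (s : Finset ℕ) (c : ℕ → ℂ)
    (h : ∀ m : ℕ, (∀ k ∈ s, k ≤ m) → ∑ k ∈ s, c k * pochDown q m k = 0) :
    ∀ k ∈ s, c k = 0 := by
  set M : ℕ := s.sup id with hM
  set R : Polynomial ℂ := ∑ k ∈ s, C (c k) * Ppoly q k with hR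
  have hRzero : R = 0 := by
    apply Polynomial.eq_zero_of_infinite_isRoot
    refine Set.infinite_of_injective_forall_mem
      (f := fun m : ℕ => ((q ^ (2 * (m + M)) : ℝ) : ℂ)) ?_ ?_
    · intro a b hab
      simp only [Complex.ofReal_inj] at hab
      have : q ^ (2 * (a + M)) = q ^ (2 * (b + M)) := hab
      have hinj : Function.Injective fun n : ℕ => q ^ n := by
        have : StrictAnti fun n : ℕ => q ^ n :=
          fun _ _ h' => pow_lt_pow_right_of_lt_one₀ hq0 hq1 h'
        exact this.injective
      have := hinj this
      omega
    · intro m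
      show eval (((q ^ (2 * (m + M)) : ℝ) : ℂ)) R = 0
      have hx : ((q ^ (2 * (m + M)) : ℝ) : ℂ) = (q : ℂ) ^ (2 * ((m + M : ℕ) : ℤ)) := by
        push_cast
        rw [← zpow_natCast (q : ℂ) (2 * (m + M))]
        push_cast
        ring_nf
      rw [hx, hR, eval_finset_sum]
      have : ∀ k ∈ s, eval ((q : ℂ) ^ (2 * ((m + M : ℕ) : ℤ))) (C (c k) * Ppoly q k)
          = c k * pochDown q (m + M) k := by
        intro k _
        rw [eval_mul, eval_C, eval_Ppoly hq0]
      rw [Finset.sum_congr rfl this]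
      exact h (m + M) fun k hk => le_trans (Finset.le_sup (f := id) hk) (Nat.le_add_left _ _)
  exact lemA hq0 s c hRzero

/-- Kernel lemma: if the `t⁰`-part of `Q` kills a single `Pol(ℂ)_q` element, the
element is zero. -/
lemma lemB {q : ℝ} (hq0 : 0 < q) (hq1 : q < 1) (c : (ℕ × ℕ) →₀ ℂ)
    (h : ∀ m : ℕ, ∑ jk ∈ c.support,
      c jk • (if jk.2 ≤ m then pochDown q m jk.2 • (X : Polynomial ℂ) ^ (m - jk.2 + jk.1)
        else 0) = 0) : c = 0 := by
  by_contra hc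
  obtain ⟨jk₀, hjk₀⟩ := Finsupp.support_nonempty_iff.2 hc
  obtain ⟨j₀, k₀⟩ := jk₀
  classical
  set D : Finset (ℕ × ℕ) := c.support.filter (fun jk => jk.1 + k₀ = jk.2 + j₀) with hD
  have hjk₀D : (j₀, k₀) ∈ D := by
    rw [hD, Finset.mem_filter]; exact ⟨hjk₀, by omega⟩
  set s : Finset ℕ := D.image Prod.snd with hs
  set c' : ℕ → ℂ := fun k => c (k + j₀ - k₀, k) with hc'
  have hDfst : ∀ jk ∈ D, jk.1 = jk.2 + j₀ - k₀ := by
    intro jk hjk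
    rw [hD, Finset.mem_filter] at hjk
    omega
  have key : ∀ k ∈ s, c' k = 0 := by
    apply lemA2 hq0 hq1
    intro m hm
    have h0 := h m
    -- take the coefficient at degree `m - k₀ + j₀`
    have hk₀m : k₀ ≤ m := hm k₀ (Finset.mem_image.2 ⟨(j₀, k₀), hjk₀D, rfl⟩)
    have hcoeff := congrArg (fun p => Polynomial.coeff p (m - k₀ + j₀)) h0
    simp only [Polynomial.finset_sum_coeff, coeff_zero, Polynomial.coeff_smul,
      smul_eq_mul] at hcoeff
    have hterm : ∀ jk ∈ c.support,
        c jk * ((if jk.2 ≤ m then pochDown q m jk.2 • (X : Polynomial ℂ) ^ (m - jk.2 + jk.1)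
          else 0)).coeff (m - k₀ + j₀)
        = if jk.1 + k₀ = jk.2 + j₀ ∧ jk.2 ≤ m then c jk * pochDown q m jk.2 else 0 := by
      intro jk _
      by_cases hle : jk.2 ≤ m
      · rw [if_pos hle, Polynomial.coeff_smul, coeff_X_pow, smul_eq_mul]
        by_cases hcond : jk.1 + k₀ = jk.2 + j₀
        · rw [if_pos (show m - k₀ + j₀ = m - jk.2 + jk.1 by omega),
            if_pos (⟨hcond, hle⟩ : jk.1 + k₀ = jk.2 + j₀ ∧ jk.2 ≤ m)]
          ring
        · rw [if_neg (show ¬ (m - k₀ + j₀ = m - jk.2 + jk.1) by omega),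
            if_neg (fun hand : jk.1 + k₀ = jk.2 + j₀ ∧ jk.2 ≤ m => hcond hand.1)]
          ring
      · rw [if_neg hle, if_neg (fun hand : jk.1 + k₀ = jk.2 + j₀ ∧ jk.2 ≤ m => hle hand.2)]
        simp
    rw [Finset.sum_congr rfl hterm, Finset.sum_ite, Finset.sum_const_zero, add_zero] at hcoeff
    have hfilter : c.support.filter (fun jk => jk.1 + k₀ = jk.2 + j₀ ∧ jk.2 ≤ m) = D := by
      rw [hD]
      apply Finset.ext
      intro jk
      simp only [Finset.mem_filter]
      constructor
      · rintro ⟨h1, h2, _⟩; exact ⟨h1, h2⟩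
      · rintro ⟨h1, h2⟩
        refine ⟨h1, h2, ?_⟩
        exact hm jk.2 (Finset.mem_image.2 ⟨jk, Finset.mem_filter.2 ⟨h1, h2⟩, rfl⟩)
    rw [hfilter] at hcoeff
    have himg : ∑ k ∈ s, c' k * pochDown q m k = ∑ jk ∈ D, c jk * pochDown q m jk.2 := by
      rw [hs]
      rw [Finset.sum_image (fun x hx y hy hxy => ?_)]
      · refine Finset.sum_congr rfl fun jk hjk => ?_
        have h5 := hDfst jk hjk
        have hjkeq : (jk.2 + j₀ - k₀, jk.2) = jk := Prod.ext (by omega) rfl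
        simp only [hc']
        rw [hjkeq]
      · have hx' := hDfst x hx
        have hy' := hDfst y hy
        exact Prod.ext (by rw [hx', hy', hxy]) hxy
    rw [himg]
    exact hcoeff
  have hk₀s : k₀ ∈ s := Finset.mem_image.2 ⟨(j₀, k₀), hjk₀D, rfl⟩
  have h6 : c (k₀ + j₀ - k₀, k₀) = 0 := key k₀ hk₀s
  have heq : ((k₀ + j₀ - k₀ : ℕ), k₀) = (j₀, k₀) := Prod.ext (by omega) rfl
  rw [heq] at h6
  exact (Finsupp.mem_support_iff.1 hjk₀) h6

lemma coeff_zero_invSeries (q : ℝ) (m k : ℕ) :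
    PowerSeries.coeff 0 (invSeries q m k) = 1 := by
  rw [invSeries, PowerSeries.coeff_zero_eq_constantCoeff_apply, map_prod]
  refine Finset.prod_eq_one fun i _ => ?_
  simp [PowerSeries.constantCoeff_mk]

lemma Icoef_zero (q : ℝ) (m k : ℕ) : Icoef q m k 0 = pochDown q m k := by
  rw [Icoef, coeff_zero_invSeries, mul_one]

/-- the `ℂ[[t]]`-linear extension `Q` of `I` to `Pol(ℂ)_q[[t]]` is
injective. -/
theorem Q_injective (q : ℝ) (hq0 : 0 < q) (hq1 : q < 1) :
    Function.Injective (Qmap q) := by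
  intro f g hfg
  funext n
  induction n using Nat.strong_induction_on with
  | _ n ih =>
    -- define the inner operator
    classical
    set T : ℕ → ℕ → (ℕ × ℕ) → Polynomial ℂ := fun b m jk =>
      (if jk.2 ≤ m then Icoef q m jk.2 b • (X : Polynomial ℂ) ^ (m - jk.2 + jk.1) else 0)
      with hT
    have hQval : ∀ (φ : ℕ → ((ℕ × ℕ) →₀ ℂ)) (m : ℕ),
        Qmap q φ n (X ^ m) = ∑ a ∈ range (n + 1), (φ a).sum fun jk v => v • T (n - a) m jk := by
      intro φ m
      rw [Qmap]
      refine Finset.sum_congr rfl fun a _ => ?_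
      rw [Finsupp.sum]
      refine Finset.sum_congr rfl fun jk _ => ?_
      have hsupp : ((X : Polynomial ℂ) ^ m).support = {m} :=
        Polynomial.support_X_pow m
      rw [hsupp, Finset.sum_singleton, Polynomial.coeff_X_pow, if_pos rfl, one_smul, hT]
    have hmain : ∀ m : ℕ, (f n).sum (fun jk v => v • T 0 m jk)
        = (g n).sum (fun jk v => v • T 0 m jk) := by
      intro m
      have h1 := congrFun (congrFun hfg n) ((X : Polynomial ℂ) ^ m)
      rw [hQval f m, hQval g m] at h1
      rw [Finset.sum_range_succ, Finset.sum_range_succ] at h1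
      have h2 : ∀ a ∈ range n, (f a).sum (fun jk v => v • T (n - a) m jk)
          = (g a).sum (fun jk v => v • T (n - a) m jk) := by
        intro a ha
        rw [ih a (Finset.mem_range.1 ha)]
      rw [Finset.sum_congr rfl h2] at h1
      have h3 : (f n).sum (fun jk v => v • T (n - n) m jk)
          = (g n).sum (fun jk v => v • T (n - n) m jk) := add_left_cancel h1
      simpa using h3
    have hsub : ∀ m : ℕ, (f n - g n).sum (fun jk v => v • T 0 m jk) = 0 := by
      intro m
      rw [Finsupp.sum_sub_index (fun a b₁ b₂ => sub_smul b₁ b₂ _), hmain m, sub_self]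
    set d : (ℕ × ℕ) →₀ ℂ := f n - g n with hd
    have : d = 0 := by
      apply lemB hq0 hq1
      intro m
      have h4 := hsub m
      rw [Finsupp.sum] at h4
      calc ∑ jk ∈ d.support,
            d jk • (if jk.2 ≤ m then pochDown q m jk.2 • (X : Polynomial ℂ) ^ (m - jk.2 + jk.1)
              else 0)
          = ∑ a ∈ d.support, d a • T 0 m a :=
            Finset.sum_congr rfl fun jk _ => by simp only [hT, Icoef_zero]
        _ = 0 := h4
    have := sub_eq_zero.1 this
    exact this
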